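/- With f(x,y) = x²y + x² + y² − y and Rₙ(x) = R⁽ⁿ⁾(x,x) defined by the iterated resultants R⁽¹⁾(x, x₁) = f(x, x₁), R⁽ⁿ⁾(x, xₙ) = Res_{x_{n−1}}( R⁽ⁿ⁻¹⁾(x, x_{n−1}), f(x_{n−1}, xₙ) ), the polynomial Rₙ(x) ∈ ℤ[x] has degree exactly 2^{n+1} − 1, for every n ≥ 1. -/

import Mathlib

open Polynomial

/-- The Sylvester matrix of two polynomials `p, q` over a commutative ring, of size
`(natDegree q + natDegree p)`: the first `natDegree q` rows contain the shifted
coefficient sequences of `p`, the remaining `natDegree p` rows those of `q`. -/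
noncomputable def sylvesterMatrix {R : Type*} [CommRing R] (p q : R[X]) :
    Matrix (Fin (q.natDegree + p.natDegree)) (Fin (q.natDegree + p.natDegree)) R :=
  fun i j =>
    if (i : ℕ) < q.natDegree then
      (if (i : ℕ) ≤ (j : ℕ) then p.coeff ((j : ℕ) - (i : ℕ)) else 0)
    else
      (if (i : ℕ) - q.natDegree ≤ (j : ℕ) then q.coeff ((j : ℕ) - ((i : ℕ) - q.natDegree))
       else 0)

/-- The resultant of two polynomials with respect to their common variable,
as the determinant of the Sylvester matrix. -/
noncomputable def resultant {R : Type*} [CommRing R] (p q : R[X]) : R :=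
  (sylvesterMatrix p q).det

/-- `f(x, y) = x²y + x² + y² - y` as an element of `ℤ[x][y]`
(inner variable `x`, outer variable `y`). -/
noncomputable def fXY : Polynomial (Polynomial ℤ) :=
  C (X ^ 2) * X + C (X ^ 2) + X ^ 2 - X

/-- `f(t, y) = t²y + t² + y² - y` as a polynomial in `t` with coefficients in
`ℤ[x][y]` (so that the resultant with respect to `t` can be formed). -/
noncomputable def fTY : Polynomial (Polynomial (Polynomial ℤ)) :=
  X ^ 2 * C X + X ^ 2 + C (X ^ 2 - X)

/-- The iterated resultants `R⁽ⁿ⁾(x, xₙ) ∈ ℤ[x][xₙ]`: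
`R⁽¹⁾(x, x₁) = f(x, x₁)` and
`R⁽ⁿ⁾(x, xₙ) = Res_{x_{n-1}}(R⁽ⁿ⁻¹⁾(x, x_{n-1}), f(x_{n-1}, xₙ))` for `n ≥ 2`
(the value at `0` is an irrelevant placeholder). -/
noncomputable def Rres : ℕ → Polynomial (Polynomial ℤ)
  | 0 => fXY
  | 1 => fXY
  | n + 2 => _root_.resultant ((Rres (n + 1)).map Polynomial.C) fTY

namespace RnAux
noncomputable section
open Equiv

abbrev T := Polynomial ℤ
abbrev S := Polynomial T

/-- `y + 1` -/
def pa : S := X + 1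
/-- `y^2 - y` -/
def pb : S := X ^ 2 - X

lemma pa_coeff (k : ℕ) : pa.coeff k = if k ≤ 1 then 1 else 0 := by
  rcases k with _ | _ | k <;> simp [pa, coeff_one, coeff_X]

lemma pb_coeff (k : ℕ) : pb.coeff k = if k = 2 then 1 else if k = 1 then -1 else 0 := by
  rcases k with _ | _ | _ | k <;> simp [pb, coeff_X, coeff_X_pow]

lemma pa_coeff_deg (k : ℕ) : (pa.coeff k).degree ≤ 0 := by
  rw [pa_coeff]; split
  · exact degree_one_le
  · simp

lemma pb_coeff_deg (k : ℕ) : (pb.coeff k).degree ≤ 0 := by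
  rw [pb_coeff]; split
  · exact degree_one_le
  · split
    · exact (degree_neg 1).le.trans degree_one_le
    · simp

lemma degree_pa : pa.degree ≤ 1 := by
  have := Polynomial.degree_X_add_C (1 : T)
  simp only [map_one] at this
  exact le_of_eq this

lemma degree_pb : pb.degree ≤ 2 := by
  refine (degree_sub_le _ _).trans ?_
  rw [degree_X_pow]
  refine max_le le_rfl (degree_X_le.trans ?_)
  norm_num

lemma degree_pb_pow (d : ℕ) : (pb ^ d).degree ≤ (2 * d : ℕ) := by
  induction d with
  | zero => simp [degree_one_le]
  | succ d ih =>
    rw [pow_succ]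
    refine (degree_mul_le _ _).trans ?_
    have : ((2 * (d+1) : ℕ) : WithBot ℕ) = ((2*d : ℕ) : WithBot ℕ) + (2 : WithBot ℕ) := by
      push_cast; ring
    rw [this]
    exact add_le_add ih degree_pb

lemma degree_pb_pow_pa (d : ℕ) : (pb ^ d * pa).degree ≤ (2 * d + 1 : ℕ) := by
  refine (degree_mul_le _ _).trans ?_
  have : ((2 * d + 1 : ℕ) : WithBot ℕ) = ((2*d : ℕ) : WithBot ℕ) + (1 : WithBot ℕ) := by
    push_cast; ring
  rw [this]
  exact add_le_add (degree_pb_pow d) degree_pa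

/-- multiplication by `pb` on coefficients -/
lemma mul_pb_coeff (u : S) (m : ℕ) (hm : 2 ≤ m) :
    (u * pb).coeff m = u.coeff (m - 2) - u.coeff (m - 1) := by
  have : u * pb = u * X ^ 2 - u * X ^ 1 := by rw [pb]; ring
  rw [this, coeff_sub, coeff_mul_X_pow', coeff_mul_X_pow']
  rw [if_pos (by omega), if_pos (by omega)]

lemma mul_pa_coeff (u : S) (m : ℕ) (hm : 1 ≤ m) :
    (u * pa).coeff m = u.coeff (m - 1) + u.coeff m := by
  have : u * pa = u * X ^ 1 + u * 1 := by rw [pa]; ring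
  rw [this, coeff_add, coeff_mul_X_pow', mul_one]
  rw [if_pos (by omega)]

lemma pb_pow_coeff_top (d : ℕ) : (pb ^ d).coeff (2 * d) = 1 := by
  induction d with
  | zero => simp
  | succ d ih =>
    rw [pow_succ, mul_pb_coeff _ _ (by omega)]
    have h1 : 2 * (d + 1) - 2 = 2 * d := by omega
    have h2 : 2 * (d + 1) - 1 = 2 * d + 1 := by omega
    rw [h1, h2, ih, coeff_eq_zero_of_degree_lt ((degree_pb_pow d).trans_lt (by
      exact_mod_cast WithBot.coe_lt_coe.2 (by omega)))]
    ring

lemma pb_pow_coeff_sub (d : ℕ) : (pb ^ (d+1)).coeff (2 * d + 1) = -(d + 1 : ℤ) • (1 : T) := by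
  induction d with
  | zero => simp [pb, coeff_X]
  | succ d ih =>
    rw [pow_succ, mul_pb_coeff _ _ (by omega)]
    have h1 : 2 * (d + 1) + 1 - 2 = 2 * d + 1 := by omega
    have h2 : 2 * (d + 1) + 1 - 1 = 2 * (d + 1) := by omega
    rw [h1, h2, ih, pb_pow_coeff_top]
    push_cast
    ring_nf

lemma pb_pow_pa_coeff_top (d : ℕ) : (pb ^ d * pa).coeff (2 * d + 1) = 1 := by
  rw [mul_pa_coeff _ _ (by omega)]
  have h1 : 2 * d + 1 - 1 = 2 * d := by omega
  rw [h1, pb_pow_coeff_top, coeff_eq_zero_of_degree_lt ((degree_pb_pow d).trans_lt (by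
    exact_mod_cast WithBot.coe_lt_coe.2 (by omega)))]
  ring

lemma fTY_eq : fTY = C pa * X ^ 2 + C pb := by
  rw [fTY, pa, pb]; simp only [map_add, map_sub, map_pow, map_one, C_1]; ring

lemma fTY_coeff (k : ℕ) : fTY.coeff k = if k = 0 then pb else if k = 2 then pa else 0 := by
  rw [fTY_eq, coeff_add, coeff_C, coeff_C_mul, coeff_X_pow]
  rcases k with _ | _ | _ | k <;> simp

lemma fTY_natDegree : fTY.natDegree = 2 := by
  have h1 : fTY.coeff 2 ≠ 0 := by
    rw [fTY_coeff]
    simp only [if_neg (by omega : (2:ℕ) ≠ 0), if_pos rfl]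
    intro h
    have := congrArg (fun u => Polynomial.coeff u 1) h
    simp [pa, coeff_one, coeff_X] at this
  have h2 : fTY.natDegree ≤ 2 := by
    rw [natDegree_le_iff_coeff_eq_zero]
    intro m hm
    rw [fTY_coeff, if_neg (by omega), if_neg (by omega)]
  exact le_antisymm h2 (le_natDegree_of_ne_zero h1)

/-- The explicit Sylvester matrix of `p.map C` and `fTY`. -/
def Mat (p : T[X]) (D : ℕ) : Matrix (Fin (D+2)) (Fin (D+2)) S :=
  fun i j =>
    if (i : ℕ) < 2 then
      (if (i : ℕ) ≤ (j : ℕ) then C (p.coeff ((j : ℕ) - (i : ℕ))) else 0)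
    else
      (if (j : ℕ) + 2 = (i : ℕ) then pb else if (j : ℕ) = (i : ℕ) then pa else 0)

lemma resultant_eq_det (p : T[X]) (D : ℕ) (hdeg : p.natDegree = D) :
    _root_.resultant (p.map C) fTY = (Mat p D).det := by
  have hmapdeg : (p.map (C : T →+* S)).natDegree = p.natDegree :=
    natDegree_map_eq_of_injective (C_injective) p
  have hsize : fTY.natDegree + (p.map (C : T →+* S)).natDegree = D + 2 := by
    rw [fTY_natDegree, hmapdeg, hdeg]; omega
  rw [_root_.resultant, ← Matrix.det_reindex_self (finCongr hsize) (sylvesterMatrix _ _)]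
  congr 1
  refine Matrix.ext fun i j => ?_
  simp only [Matrix.reindex_apply, Matrix.submatrix_apply, sylvesterMatrix, Mat,
    finCongr_symm, finCongr_apply, Fin.coe_cast, fTY_natDegree, coeff_map]
  by_cases h1 : (i:ℕ) < 2
  · rw [if_pos h1, if_pos h1]
  · rw [if_neg h1, if_neg h1]
    have hi2 : 2 ≤ (i:ℕ) := by omega
    rcases Nat.lt_or_ge (j:ℕ) ((i:ℕ) - 2) with hlt | hge
    · rw [if_neg (by omega), if_neg (by omega), if_neg (by omega)]
    · rw [if_pos hge, fTY_coeff]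
      by_cases hb : (j:ℕ) + 2 = (i:ℕ)
      · rw [if_pos (by omega : (j:ℕ) - ((i:ℕ)-2) = 0), if_pos hb]
      · rw [if_neg (by omega : ¬ (j:ℕ) - ((i:ℕ)-2) = 0), if_neg hb]
        by_cases hc : (j:ℕ) = (i:ℕ)
        · rw [if_pos (by omega : (j:ℕ) - ((i:ℕ)-2) = 2), if_pos hc]
        · rw [if_neg (by omega : ¬ (j:ℕ) - ((i:ℕ)-2) = 2), if_neg hc]
section perms
variable (D : ℕ)

def ρ : Equiv.Perm (Fin (D+2)) := finRotate (D+2)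

lemma rho_val (i : Fin (D+2)) : ((ρ D) i : ℕ) = ((i:ℕ) + 1) % (D+2) := by
  rw [ρ, finRotate_succ_apply, Fin.val_add, Fin.val_one]

def σ1 : Equiv.Perm (Fin (D+2)) := ρ D * ρ D

lemma σ1_val (i : Fin (D+2)) : ((σ1 D) i : ℕ) = ((i:ℕ) + 2) % (D+2) := by
  rw [σ1, Equiv.Perm.mul_apply, rho_val, rho_val, Nat.mod_add_mod]

def eD : Fin (D+2) := ⟨D, by omega⟩
def eD1 : Fin (D+2) := ⟨D+1, by omega⟩
def eDm1 : Fin (D+2) := ⟨D-1, by omega⟩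
def eDm2 : Fin (D+2) := ⟨D-2, by omega⟩

lemma eD_val : ((eD D) : ℕ) = D := rfl
lemma eD1_val : ((eD1 D) : ℕ) = D+1 := rfl
lemma eDm1_val : ((eDm1 D) : ℕ) = D-1 := rfl
lemma eDm2_val : ((eDm2 D) : ℕ) = D-2 := rfl

def σ3 : Equiv.Perm (Fin (D+2)) := σ1 D * Equiv.swap (eDm2 D) (eD D)
def σ5 : Equiv.Perm (Fin (D+2)) :=
  σ1 D * (Equiv.swap (eDm1 D) (eD1 D) * Equiv.swap (eDm1 D) (eD D))
def σ6 : Equiv.Perm (Fin (D+2)) := σ1 D * Equiv.swap (eDm1 D) (eD1 D)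

lemma σ1_val_lt (i : Fin (D+2)) (h : (i:ℕ) < D) : ((σ1 D) i : ℕ) = (i:ℕ) + 2 := by
  rw [σ1_val, Nat.mod_eq_of_lt (by omega)]

lemma σ1_eD : ((σ1 D) (eD D) : ℕ) = 0 := by
  rw [σ1_val, eD_val]
  simp

lemma σ1_eD1 : ((σ1 D) (eD1 D) : ℕ) = 1 := by
  rw [σ1_val, eD1_val, show D + 1 + 2 = 1 + (D + 2) by omega, Nat.add_mod_right,
    Nat.mod_eq_of_lt (by omega)]

variable {D} (hD : 2 ≤ D)

include hD

lemma ne_eDm2_eD : eDm2 D ≠ eD D :=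
  Fin.ne_of_val_ne (by rw [eDm2_val, eD_val]; omega)

lemma ne_eDm1_eD : eDm1 D ≠ eD D :=
  Fin.ne_of_val_ne (by rw [eDm1_val, eD_val]; omega)

omit hD in
lemma ne_eDm1_eD1 : eDm1 D ≠ eD1 D :=
  Fin.ne_of_val_ne (by rw [eDm1_val, eD1_val]; omega)

omit hD in
lemma sign_σ1 : Equiv.Perm.sign (σ1 D) = 1 := by
  rw [σ1, map_mul, ρ, sign_finRotate, ← pow_add]
  exact Even.neg_one_pow ⟨D+1, by omega⟩

lemma sign_σ3 : Equiv.Perm.sign (σ3 D) = -1 := by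
  rw [σ3, map_mul, sign_σ1, Equiv.Perm.sign_swap (ne_eDm2_eD hD), one_mul]

lemma sign_σ5 : Equiv.Perm.sign (σ5 D) = 1 := by
  rw [σ5, map_mul, map_mul, sign_σ1,
    Equiv.Perm.sign_swap ne_eDm1_eD1, Equiv.Perm.sign_swap (ne_eDm1_eD hD)]
  norm_num

omit hD in
lemma sign_σ6 : Equiv.Perm.sign (σ6 D) = -1 := by
  rw [σ6, map_mul, sign_σ1, Equiv.Perm.sign_swap ne_eDm1_eD1, one_mul]

-- actions of σ3
omit hD in
lemma σ3_other (i : Fin (D+2)) (h2 : (i:ℕ) ≠ D-2) (h3 : (i:ℕ) ≠ D) :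
    ((σ3 D) i : ℕ) = (((i:ℕ) + 2) % (D+2)) := by
  rw [σ3, Equiv.Perm.mul_apply,
    Equiv.swap_apply_of_ne_of_ne (Fin.ne_of_val_ne (by rw [eDm2_val]; exact h2))
      (Fin.ne_of_val_ne (by rw [eD_val]; exact h3)), σ1_val]

omit hD in
lemma σ3_eDm2 : ((σ3 D) (eDm2 D) : ℕ) = 0 := by
  rw [σ3, Equiv.Perm.mul_apply, Equiv.swap_apply_left, σ1_eD]

lemma σ3_eD : ((σ3 D) (eD D) : ℕ) = D := by
  rw [σ3, Equiv.Perm.mul_apply, Equiv.swap_apply_right, σ1_val, eDm2_val,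
    show D - 2 + 2 = D by omega, Nat.mod_eq_of_lt (by omega)]

lemma σ3_eD1 : ((σ3 D) (eD1 D) : ℕ) = 1 := by
  rw [σ3, Equiv.Perm.mul_apply,
    Equiv.swap_apply_of_ne_of_ne (Fin.ne_of_val_ne (by rw [eD1_val, eDm2_val]; omega))
      (Fin.ne_of_val_ne (by rw [eD1_val, eD_val]; omega)), σ1_eD1]

-- actions of σ5
omit hD in
lemma σ5_other (i : Fin (D+2)) (h2 : (i:ℕ) ≠ D-1) (h3 : (i:ℕ) ≠ D) (h4 : (i:ℕ) ≠ D+1) :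
    ((σ5 D) i : ℕ) = (((i:ℕ) + 2) % (D+2)) := by
  rw [σ5, Equiv.Perm.mul_apply, Equiv.Perm.mul_apply,
    Equiv.swap_apply_of_ne_of_ne
      (show i ≠ eDm1 D from Fin.ne_of_val_ne (by rw [eDm1_val]; exact h2))
      (show i ≠ eD D from Fin.ne_of_val_ne (by rw [eD_val]; exact h3)),
    Equiv.swap_apply_of_ne_of_ne
      (show i ≠ eDm1 D from Fin.ne_of_val_ne (by rw [eDm1_val]; exact h2))
      (show i ≠ eD1 D from Fin.ne_of_val_ne (by rw [eD1_val]; exact h4)), σ1_val]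

lemma σ5_eDm1 : ((σ5 D) (eDm1 D) : ℕ) = 0 := by
  rw [σ5, Equiv.Perm.mul_apply, Equiv.Perm.mul_apply, Equiv.swap_apply_left,
    Equiv.swap_apply_of_ne_of_ne (ne_eDm1_eD hD).symm
      (Fin.ne_of_val_ne (by rw [eD_val, eD1_val]; omega)), σ1_eD]

omit hD in
lemma σ5_eD : ((σ5 D) (eD D) : ℕ) = 1 := by
  rw [σ5, Equiv.Perm.mul_apply, Equiv.Perm.mul_apply, Equiv.swap_apply_right,
    Equiv.swap_apply_left, σ1_eD1]

lemma σ5_eD1 : ((σ5 D) (eD1 D) : ℕ) = D+1 := by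
  rw [σ5, Equiv.Perm.mul_apply, Equiv.Perm.mul_apply,
    Equiv.swap_apply_of_ne_of_ne (ne_eDm1_eD1).symm
      (Fin.ne_of_val_ne (by rw [eD_val, eD1_val]; omega)),
    Equiv.swap_apply_right, σ1_val, eDm1_val,
    show D - 1 + 2 = D + 1 by omega, Nat.mod_eq_of_lt (by omega)]

-- actions of σ6
omit hD in
lemma σ6_other (i : Fin (D+2)) (h2 : (i:ℕ) ≠ D-1) (h4 : (i:ℕ) ≠ D+1) :
    ((σ6 D) i : ℕ) = (((i:ℕ) + 2) % (D+2)) := by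
  rw [σ6, Equiv.Perm.mul_apply,
    Equiv.swap_apply_of_ne_of_ne (Fin.ne_of_val_ne (by rw [eDm1_val]; exact h2))
      (Fin.ne_of_val_ne (by rw [eD1_val]; exact h4)), σ1_val]

omit hD in
lemma σ6_eDm1 : ((σ6 D) (eDm1 D) : ℕ) = 1 := by
  rw [σ6, Equiv.Perm.mul_apply, Equiv.swap_apply_left, σ1_eD1]

lemma σ6_eD : ((σ6 D) (eD D) : ℕ) = 0 := by
  rw [σ6, Equiv.Perm.mul_apply,
    Equiv.swap_apply_of_ne_of_ne (ne_eDm1_eD hD).symm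
      (Fin.ne_of_val_ne (by rw [eD_val, eD1_val]; omega)), σ1_eD]

lemma σ6_eD1 : ((σ6 D) (eD1 D) : ℕ) = D+1 := by
  rw [σ6, Equiv.Perm.mul_apply, Equiv.swap_apply_right, σ1_val, eDm1_val,
    show D - 1 + 2 = D + 1 by omega, Nat.mod_eq_of_lt (by omega)]

-- distinctness
lemma σ1_ne_σ3 : σ1 D ≠ σ3 D := fun h => by
  have : ((σ1 D) (eD D) : ℕ) = ((σ3 D) (eD D) : ℕ) := by rw [h]
  rw [σ1_eD, σ3_eD hD] at this; omega

lemma σ1_ne_σ5 : σ1 D ≠ σ5 D := fun h => by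
  have : ((σ1 D) (eD1 D) : ℕ) = ((σ5 D) (eD1 D) : ℕ) := by rw [h]
  rw [σ1_eD1, σ5_eD1 hD] at this; omega

lemma σ1_ne_σ6 : σ1 D ≠ σ6 D := fun h => by
  have : ((σ1 D) (eD1 D) : ℕ) = ((σ6 D) (eD1 D) : ℕ) := by rw [h]
  rw [σ1_eD1, σ6_eD1 hD] at this; omega

lemma σ3_ne_σ5 : σ3 D ≠ σ5 D := fun h => by
  have : ((σ3 D) (eD1 D) : ℕ) = ((σ5 D) (eD1 D) : ℕ) := by rw [h]
  rw [σ3_eD1 hD, σ5_eD1 hD] at this; omega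

lemma σ3_ne_σ6 : σ3 D ≠ σ6 D := fun h => by
  have : ((σ3 D) (eD1 D) : ℕ) = ((σ6 D) (eD1 D) : ℕ) := by rw [h]
  rw [σ3_eD1 hD, σ6_eD1 hD] at this; omega

lemma σ5_ne_σ6 : σ5 D ≠ σ6 D := fun h => by
  have : ((σ5 D) (eDm1 D) : ℕ) = ((σ6 D) (eDm1 D) : ℕ) := by rw [h]
  rw [σ5_eDm1 hD, σ6_eDm1] at this; omega

end perms

-- generic product helpers
lemma prod_two_special {β : Type*} [CommMonoid β] {n : ℕ} (f : Fin n → β) (x y : Fin n)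
    (hxy : x ≠ y) (w : β) (hother : ∀ i, i ≠ x → i ≠ y → f i = w) :
    ∏ i, f i = f x * f y * w ^ (n - 2) := by
  have hy : y ∈ Finset.univ.erase x := Finset.mem_erase.2 ⟨hxy.symm, Finset.mem_univ y⟩
  have h1 : ((Finset.univ.erase x).erase y).prod f = w ^ (n - 2) := by
    rw [Finset.prod_eq_pow_card (fun i hi => by
      rw [Finset.mem_erase, Finset.mem_erase] at hi
      exact hother i hi.2.1 hi.1)]
    rw [Finset.card_erase_of_mem hy, Finset.card_erase_of_mem (Finset.mem_univ x),
      Finset.card_univ, Fintype.card_fin]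
    congr 1
  rw [← Finset.mul_prod_erase Finset.univ f (Finset.mem_univ x),
    ← Finset.mul_prod_erase _ f hy, h1, mul_assoc]

lemma prod_three_special {β : Type*} [CommMonoid β] {n : ℕ} (f : Fin n → β) (x y z : Fin n)
    (hxy : x ≠ y) (hxz : x ≠ z) (hyz : y ≠ z) (w : β)
    (hother : ∀ i, i ≠ x → i ≠ y → i ≠ z → f i = w) :
    ∏ i, f i = f x * f y * f z * w ^ (n - 3) := by
  have hy : y ∈ Finset.univ.erase x := Finset.mem_erase.2 ⟨hxy.symm, Finset.mem_univ y⟩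
  have hz : z ∈ (Finset.univ.erase x).erase y :=
    Finset.mem_erase.2 ⟨hyz.symm, Finset.mem_erase.2 ⟨hxz.symm, Finset.mem_univ z⟩⟩
  have h1 : (((Finset.univ.erase x).erase y).erase z).prod f = w ^ (n - 3) := by
    rw [Finset.prod_eq_pow_card (fun i hi => by
      rw [Finset.mem_erase, Finset.mem_erase, Finset.mem_erase] at hi
      exact hother i hi.2.2.1 hi.2.1 hi.1)]
    rw [Finset.card_erase_of_mem hz, Finset.card_erase_of_mem hy,
      Finset.card_erase_of_mem (Finset.mem_univ x), Finset.card_univ, Fintype.card_fin]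
    congr 1
  rw [← Finset.mul_prod_erase Finset.univ f (Finset.mem_univ x),
    ← Finset.mul_prod_erase _ f hy, ← Finset.mul_prod_erase _ f hz, h1,
    mul_assoc, mul_assoc]


-- ## coefficient-degree machinery
lemma coeff_deg_mul (u v : S) (du dv : ℕ)
    (hu : ∀ k, (u.coeff k).degree ≤ (du : ℕ)) (hv : ∀ k, (v.coeff k).degree ≤ (dv : ℕ)) :
    ∀ k, ((u * v).coeff k).degree ≤ ((du + dv : ℕ) : WithBot ℕ) := by
  intro k
  rw [coeff_mul]
  refine (degree_sum_le _ _).trans (Finset.sup_le fun x _ => ?_)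
  refine (degree_mul_le _ _).trans ?_
  rw [Nat.cast_add]
  exact add_le_add (hu x.1) (hv x.2)

lemma coeff_deg_prod {ι : Type*} (s : Finset ι) (f : ι → S) (d : ι → ℕ)
    (h : ∀ i ∈ s, ∀ k, ((f i).coeff k).degree ≤ ((d i : ℕ) : WithBot ℕ)) :
    ∀ k, ((∏ i ∈ s, f i).coeff k).degree ≤ ((∑ i ∈ s, d i : ℕ) : WithBot ℕ) := by
  classical
  induction s using Finset.induction_on with
  | empty =>
    intro k
    simp only [Finset.prod_empty, Finset.sum_empty, coeff_one, Nat.cast_zero]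
    split
    · exact degree_one_le
    · simp
  | insert a s' hnotmem ih =>
    intro k
    rw [Finset.prod_insert hnotmem, Finset.sum_insert hnotmem]
    exact coeff_deg_mul _ _ _ _ (h a (Finset.mem_insert_self a s'))
      (ih (fun i hi => h i (Finset.mem_insert_of_mem hi))) k

lemma Mat_entry_coeff_deg (p : T[X]) (D : ℕ) (h3 : ∀ k, (p.coeff k).degree ≤ (D : ℕ))
    (r c : Fin (D+2)) :
    ∀ k, (((Mat p D) r c).coeff k).degree ≤ (((if (r:ℕ) < 2 then D else 0) : ℕ) : WithBot ℕ) := by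
  intro k
  rw [Mat]
  by_cases hr : (r : ℕ) < 2
  · rw [if_pos hr, if_pos hr]
    split
    · rw [coeff_C]
      split
      · exact h3 _
      · simp
    · simp
  · rw [if_neg hr, if_neg hr]
    split
    · exact pb_coeff_deg k
    · split
      · exact pa_coeff_deg k
      · simp

lemma filter_lt2 {D : ℕ} (σ : Equiv.Perm (Fin (D+2))) :
    Finset.univ.filter (fun i => ((σ i : ℕ)) < 2) = {σ.symm 0, σ.symm 1} := by
  ext i
  simp only [Finset.mem_filter, Finset.mem_univ, true_and, Finset.mem_insert,
    Finset.mem_singleton, ← Equiv.apply_eq_iff_eq_symm_apply]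
  constructor
  · intro h
    have : σ i = 0 ∨ σ i = 1 := by
      rcases (by omega : (σ i : ℕ) = 0 ∨ (σ i : ℕ) = 1) with h' | h'
      · exact Or.inl (Fin.ext (by simpa using h'))
      · exact Or.inr (Fin.ext (by simpa using h'))
    tauto
  · rintro (h | h) <;> rw [h] <;> simp

lemma sum_bound {D : ℕ} (σ : Equiv.Perm (Fin (D+2))) :
    (∑ i, if ((σ i : ℕ)) < 2 then D else 0) = 2 * D := by
  classical
  rw [Finset.sum_ite, Finset.sum_const, Finset.sum_const_zero, add_zero, filter_lt2]
  have hne : σ.symm 0 ≠ σ.symm 1 := by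
    intro h
    have := σ.symm.injective.eq_iff.mp h
    have h2 : ((0 : Fin (D+2)) : ℕ) = ((1 : Fin (D+2)) : ℕ) := by rw [this]
    rw [Fin.val_zero, Fin.val_one] at h2
    omega
  rw [Finset.card_insert_of_notMem (by simpa using hne), Finset.card_singleton]
  rw [smul_eq_mul]

lemma card_filter_lt2 {D : ℕ} (σ : Equiv.Perm (Fin (D+2))) :
    (Finset.univ.filter (fun i => ((σ i : ℕ)) < 2)).card = 2 := by
  rw [filter_lt2]
  have hne : σ.symm 0 ≠ σ.symm 1 := by
    intro h
    have := σ.symm.injective.eq_iff.mp h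
    have h2 : ((0 : Fin (D+2)) : ℕ) = ((1 : Fin (D+2)) : ℕ) := by rw [this]
    rw [Fin.val_zero, Fin.val_one] at h2
    omega
  rw [Finset.card_insert_of_notMem (by simpa using hne), Finset.card_singleton]

lemma classify (p : T[X]) (D : ℕ) (hD : 2 ≤ D)
    (htop : ∀ m, D < m → p.coeff m = 0)
    (σ : Equiv.Perm (Fin (D+2))) (k : ℕ) (hk : 2*D - 1 ≤ k)
    (hne : (∏ i, Mat p D (σ i) i).coeff k ≠ 0) :
    σ = σ1 D ∨ σ = σ3 D ∨ σ = σ5 D ∨ σ = σ6 D := by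
  classical
  have h0 : ∀ i, Mat p D (σ i) i ≠ 0 := by
    intro i hzero
    exact hne (by
      rw [Finset.prod_eq_zero (f := fun j : Fin (D+2) => Mat p D (σ j) j)
        (Finset.mem_univ i) hzero, coeff_zero])
  have hinj : ∀ i j : Fin (D+2), ((σ i : ℕ)) = ((σ j : ℕ)) → i = j :=
    fun i j h => σ.injective (Fin.ext h)
  have dvals : ∀ i j : Fin (D+2), i ≠ j → ((σ i : ℕ)) ≠ ((σ j : ℕ)) :=
    fun i j hij h => hij (hinj _ _ h)
  have hrow0 : ∀ i : Fin (D+2), ((σ i : ℕ)) = 0 → (i : ℕ) ≤ D := by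
    intro i h
    by_contra hgt
    refine h0 i ?_
    rw [Mat, if_pos (by omega), if_pos (by omega), htop ((i:ℕ) - ((σ i : ℕ))) (by omega),
      map_zero]
  have hband : ∀ i : Fin (D+2), 2 ≤ ((σ i : ℕ)) →
      ((i:ℕ) + 2 = ((σ i : ℕ)) ∨ (i:ℕ) = ((σ i : ℕ))) := by
    intro i h
    by_contra hcon
    push_neg at hcon
    refine h0 i ?_
    rw [Mat, if_neg (by omega), if_neg hcon.1, if_neg hcon.2]
  -- degree accounting
  set g : Fin (D+2) → ℕ :=
    fun i => if ((σ i:ℕ)) < 2 then 0 else if (i:ℕ) = ((σ i:ℕ)) then 1 else 2 with hg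
  have hdegy : ∀ i : Fin (D+2), (Mat p D (σ i) i).degree ≤ ((g i : ℕ) : WithBot ℕ) := by
    intro i
    simp only [hg]
    by_cases hlt : ((σ i:ℕ)) < 2
    · rw [if_pos hlt, Mat, if_pos hlt]
      simp only [Nat.cast_zero]
      split
      · exact degree_C_le
      · simp
    · rw [if_neg hlt]
      have hent : Mat p D (σ i) i =
          (if (i:ℕ) + 2 = ((σ i:ℕ)) then pb else if (i:ℕ) = ((σ i:ℕ)) then pa else 0) := by
        rw [Mat, if_neg hlt]
      rcases hband i (by omega) with hsh | hfx
      · rw [show (if (i:ℕ) = ((σ i:ℕ)) then 1 else 2) = 2 from if_neg (by omega), hent,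
          if_pos hsh]
        exact degree_pb.trans (by norm_num)
      · rw [show (if (i:ℕ) = ((σ i:ℕ)) then 1 else 2) = 1 from if_pos hfx, hent,
          if_neg (by omega), if_pos hfx]
        exact degree_pa.trans (by norm_num)
  have hksum : k ≤ ∑ i, g i := by
    have hprod : ((∏ i, Mat p D (σ i) i)).degree ≤ ((∑ i, g i : ℕ) : WithBot ℕ) := by
      refine (degree_prod_le _ _).trans ?_
      rw [Nat.cast_sum]
      exact Finset.sum_le_sum (fun i _ => hdegy i)
    exact_mod_cast (le_degree_of_ne_zero hne).trans hprod
  -- cardinal accounting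
  set F : Finset (Fin (D+2)) := Finset.univ.filter (fun i => ¬ (((σ i:ℕ)) < 2)) with hF
  set Ffix : Finset (Fin (D+2)) := F.filter (fun i => (i:ℕ) = ((σ i:ℕ))) with hFfix
  have hmemF : ∀ i : Fin (D+2), i ∈ F ↔ ¬ (((σ i:ℕ)) < 2) := by
    intro i
    rw [hF, Finset.mem_filter]
    simp
  have hmemFfix' : ∀ i : Fin (D+2), i ∈ Ffix ↔ (¬ (((σ i:ℕ)) < 2) ∧ (i:ℕ) = ((σ i:ℕ))) := by
    intro i
    rw [hFfix, Finset.mem_filter, hmemF]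
  have hcardF : F.card = D := by
    have := Finset.card_filter_add_card_filter_not
      (s := (Finset.univ : Finset (Fin (D+2)))) (p := fun i => ((σ i:ℕ)) < 2)
    rw [card_filter_lt2 σ] at this
    rw [Finset.card_univ, Fintype.card_fin] at this
    rw [hF]
    omega
  have hsumg : ∑ i, g i = 2 * D - Ffix.card := by
    have hsplit := Finset.sum_filter_add_sum_filter_not
      (Finset.univ : Finset (Fin (D+2))) (fun i => ¬ (((σ i:ℕ)) < 2)) g
    have hz : ∑ i ∈ Finset.univ.filter (fun i => ¬¬(((σ i:ℕ)) < 2)), g i = 0 := by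
      refine Finset.sum_eq_zero fun i hi => ?_
      rw [Finset.mem_filter, not_not] at hi
      rw [hg]
      exact if_pos hi.2
    have hsplit2 := Finset.sum_filter_add_sum_filter_not F
      (fun i : Fin (D+2) => (i:ℕ) = ((σ i:ℕ))) g
    have h1 : ∑ i ∈ Ffix, g i = Ffix.card := by
      rw [Finset.sum_eq_card_nsmul (b := 1) (fun i hi => by
        obtain ⟨ha, hb⟩ := (hmemFfix' i).mp hi
        simp only [hg]
        simp only [if_neg ha, if_pos hb]), smul_eq_mul, mul_one]
    have h2 : ∑ i ∈ F.filter (fun i : Fin (D+2) => ¬ (i:ℕ) = ((σ i:ℕ))), g i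
        = (F.filter (fun i : Fin (D+2) => ¬ (i:ℕ) = ((σ i:ℕ)))).card * 2 := by
      rw [Finset.sum_eq_card_nsmul (b := 2) (fun i hi => by
        obtain ⟨hiF, hnf⟩ := Finset.mem_filter.mp hi
        have ha := (hmemF i).mp hiF
        simp only [hg]
        simp only [if_neg ha, if_neg hnf]), smul_eq_mul]
    have hcards := Finset.card_filter_add_card_filter_not
      (s := F) (p := fun i : Fin (D+2) => (i:ℕ) = ((σ i:ℕ)))
    rw [hcardF, ← hFfix] at hcards
    rw [← hsplit, hz, add_zero, ← hF, ← hsplit2, h1, h2]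
    omega
  have hfixle : Ffix.card ≤ 1 := by
    rw [hsumg] at hksum
    omega
  -- basic membership fact
  have hmemFfix : ∀ i : Fin (D+2), ¬ (((σ i:ℕ)) < 2) → ((i:ℕ) = ((σ i:ℕ))) → i ∈ Ffix := by
    intro i hi hfx
    exact (hmemFfix' i).mpr ⟨hi, hfx⟩
  rcases Finset.eq_empty_or_nonempty Ffix with hemp | ⟨istar, histar⟩
  · -- no fixed band column : σ1 (or contradiction)
    have hshift : ∀ i : Fin (D+2), ¬ (((σ i:ℕ)) < 2) → ((σ i:ℕ)) = (i:ℕ) + 2 := by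
      intro i hi
      rcases hband i (by omega) with h | h
      · omega
      · exact absurd (hemp ▸ hmemFfix i hi h) (Finset.notMem_empty i)
    have hsmall : ∀ i : Fin (D+2), ¬ (((σ i:ℕ)) < 2) → (i:ℕ) < D := by
      intro i hi
      have h1 := hshift i hi
      have h2 := (σ i).isLt
      omega
    have heD : ((σ (eD D) : ℕ)) < 2 := by
      by_contra hcon
      have := hsmall _ hcon
      rw [eD_val] at this
      omega
    have heD1 : ((σ (eD1 D) : ℕ)) < 2 := by
      by_contra hcon
      have := hsmall _ hcon
      rw [eD1_val] at this
      omega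
    have hneD : eD D ≠ eD1 D := Fin.ne_of_val_ne (by rw [eD_val, eD1_val]; omega)
    rcases (by omega : ((σ (eD D) : ℕ)) = 0 ∨ ((σ (eD D) : ℕ)) = 1) with h1 | h1
    · have h2 : ((σ (eD1 D) : ℕ)) = 1 := by
        have := dvals _ _ hneD
        omega
      refine Or.inl (Equiv.ext fun i => Fin.ext ?_)
      by_cases hiD : (i:ℕ) = D
      · have : i = eD D := Fin.ext hiD
        rw [this, h1, σ1_eD]
      · by_cases hiD1 : (i:ℕ) = D + 1
        · have : i = eD1 D := Fin.ext hiD1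
          rw [this, h2, σ1_eD1]
        · have hge : ¬ (((σ i:ℕ)) < 2) := by
            intro hlt
            rcases (by omega : ((σ i:ℕ)) = 0 ∨ ((σ i:ℕ)) = 1) with h | h
            · exact hiD (congrArg Fin.val (hinj i (eD D) (by omega)))
            · exact hiD1 (congrArg Fin.val (hinj i (eD1 D) (by omega)))
          rw [hshift i hge, σ1_val_lt D i (hsmall i hge)]
    · -- σ (eD) = 1, so σ (eD1) = 0, impossible
      have h2 : ((σ (eD1 D) : ℕ)) = 0 := by
        have := dvals _ _ hneD
        omega
      have := hrow0 _ h2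
      rw [eD1_val] at this
      omega
  · -- exactly one fixed band column istar
    have huniq : ∀ j ∈ Ffix, j = istar := by
      intro j hj
      exact Finset.card_le_one.mp hfixle j hj istar histar
    obtain ⟨histar1, histarfx⟩ := (hmemFfix' istar).mp histar
    have histar2 : 2 ≤ (istar : ℕ) := by omega
    have hstarfix : ((σ istar : ℕ)) = (istar : ℕ) := histarfx.symm
    have hshift : ∀ i : Fin (D+2), ¬ (((σ i:ℕ)) < 2) → i ≠ istar → ((σ i:ℕ)) = (i:ℕ) + 2 := by
      intro i hi hne'
      rcases hband i (by omega) with h | h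
      · omega
      · exact absurd (huniq i (hmemFfix i hi h)) hne'
    have hsmall : ∀ i : Fin (D+2), ¬ (((σ i:ℕ)) < 2) → i ≠ istar → (i:ℕ) < D := by
      intro i hi hne'
      have h1 := hshift i hi hne'
      have h2 := (σ i).isLt
      omega
    set w : Fin (D+2) := ⟨(istar:ℕ) - 2, by omega⟩ with hw_def
    have hw_val : (w : ℕ) = (istar:ℕ) - 2 := rfl
    have hwne : w ≠ istar := Fin.ne_of_val_ne (by rw [hw_val]; omega)
    have hw : ((σ w : ℕ)) < 2 := by
      by_contra hcon
      refine hwne (hinj w istar ?_)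
      rw [hshift w hcon hwne, hstarfix, hw_val]
      omega
    have hbig : ∀ i : Fin (D+2), D ≤ (i:ℕ) → i ≠ istar → ((σ i : ℕ)) < 2 := by
      intro i hi hne'
      by_contra hcon
      have := hsmall i hcon hne'
      omega
    have hstar_cases : (istar:ℕ) = D ∨ (istar:ℕ) = D + 1 := by
      by_contra hcon
      push_neg at hcon
      have histar3 : (istar:ℕ) < D := by
        have := istar.isLt
        omega
      have h1 : ((σ (eD D) : ℕ)) < 2 :=
        hbig _ (by rw [eD_val]) (Fin.ne_of_val_ne (by rw [eD_val]; omega))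
      have h2 : ((σ (eD1 D) : ℕ)) < 2 :=
        hbig _ (by rw [eD1_val]; omega) (Fin.ne_of_val_ne (by rw [eD1_val]; omega))
      have d12 := dvals _ _ (Fin.ne_of_val_ne (by rw [eD_val, eD1_val]; omega) :
        eD D ≠ eD1 D)
      have d13 := dvals _ _ (Fin.ne_of_val_ne (by rw [eD_val, hw_val]; omega) :
        eD D ≠ w)
      have d23 := dvals _ _ (Fin.ne_of_val_ne (by rw [eD1_val, hw_val]; omega) :
        eD1 D ≠ w)
      omega
    rcases hstar_cases with hsD | hsD1
    · -- istar = eD : σ3 (or contradiction)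
      have histar_eD : istar = eD D := Fin.ext (by rw [hsD, eD_val])
      have hweq : w = eDm2 D := Fin.ext (by rw [hw_val, eDm2_val, hsD])
      have h2 : ((σ (eD1 D) : ℕ)) < 2 :=
        hbig _ (by rw [eD1_val]; omega) (Fin.ne_of_val_ne (by rw [eD1_val, hsD]; omega))
      have d23 := dvals _ _ (Fin.ne_of_val_ne (by rw [eD1_val, hw_val]; omega) :
        eD1 D ≠ w)
      rcases (by omega : ((σ (eD1 D) : ℕ)) = 0 ∨ ((σ (eD1 D) : ℕ)) = 1) with h3 | h3
      · have := hrow0 _ h3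
        rw [eD1_val] at this
        omega
      · have h4 : ((σ w : ℕ)) = 0 := by omega
        refine Or.inr (Or.inl (Equiv.ext fun i => Fin.ext ?_))
        by_cases hi1 : (i:ℕ) = D - 2
        · have : i = eDm2 D := Fin.ext (by rw [hi1, eDm2_val])
          rw [this, σ3_eDm2, ← hweq, h4]
        · by_cases hi2 : (i:ℕ) = D + 1
          · have : i = eD1 D := Fin.ext (by rw [hi2, eD1_val])
            rw [this, σ3_eD1 hD, h3]
          · by_cases hi3 : (i:ℕ) = D
            · have : i = eD D := Fin.ext (by rw [hi3, eD_val])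
              rw [this, σ3_eD hD, ← histar_eD, hstarfix, hsD]
            · have hneistar : i ≠ istar := Fin.ne_of_val_ne (by rw [hsD]; exact hi3)
              have hge : ¬ (((σ i:ℕ)) < 2) := by
                intro hlt
                rcases (by omega : ((σ i:ℕ)) = 0 ∨ ((σ i:ℕ)) = 1) with h | h
                · exact hi1 (by
                    have := congrArg Fin.val (hinj i w (by omega))
                    rw [hw_val, hsD] at this
                    omega)
                · exact hi2 (by
                    have := congrArg Fin.val (hinj i (eD1 D) (by omega))
                    rw [eD1_val] at this
                    omega)
              have hlt : (i:ℕ) < D := hsmall i hge hneistar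
              rw [hshift i hge hneistar, σ3_other i hi1 hi3,
                Nat.mod_eq_of_lt (by omega)]
    · -- istar = eD1 : σ5 or σ6
      have histar_eD1 : istar = eD1 D := Fin.ext (by rw [hsD1, eD1_val])
      have hweq : w = eDm1 D := Fin.ext (by rw [hw_val, eDm1_val, hsD1]; omega)
      have h2 : ((σ (eD D) : ℕ)) < 2 :=
        hbig _ (by rw [eD_val]) (Fin.ne_of_val_ne (by rw [eD_val, hsD1]; omega))
      have d23 := dvals _ _ (Fin.ne_of_val_ne (by rw [eD_val, hw_val]; omega) :
        eD D ≠ w)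
      rcases (by omega : ((σ (eD D) : ℕ)) = 0 ∨ ((σ (eD D) : ℕ)) = 1) with h3 | h3
      · -- σ6
        have h4 : ((σ w : ℕ)) = 1 := by omega
        refine Or.inr (Or.inr (Or.inr (Equiv.ext fun i => Fin.ext ?_)))
        by_cases hi1 : (i:ℕ) = D - 1
        · have : i = eDm1 D := Fin.ext (by rw [hi1, eDm1_val])
          rw [this, σ6_eDm1, ← hweq, h4]
        · by_cases hi2 : (i:ℕ) = D + 1
          · have : i = eD1 D := Fin.ext (by rw [hi2, eD1_val])
            rw [this, σ6_eD1 hD, ← histar_eD1, hstarfix, hsD1]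
          · by_cases hi3 : (i:ℕ) = D
            · have : i = eD D := Fin.ext (by rw [hi3, eD_val])
              rw [this, σ6_eD hD, h3]
            · have hneistar : i ≠ istar := Fin.ne_of_val_ne (by rw [hsD1]; exact hi2)
              have hge : ¬ (((σ i:ℕ)) < 2) := by
                intro hlt
                rcases (by omega : ((σ i:ℕ)) = 0 ∨ ((σ i:ℕ)) = 1) with h | h
                · exact hi3 (by
                    have := congrArg Fin.val (hinj i (eD D) (by omega))
                    rw [eD_val] at this
                    omega)
                · exact hi1 (by
                    have := congrArg Fin.val (hinj i w (by omega))
                    rw [hw_val, hsD1] at this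
                    omega)
              have hlt : (i:ℕ) < D := hsmall i hge hneistar
              rw [hshift i hge hneistar, σ6_other i hi1 hi2,
                Nat.mod_eq_of_lt (by omega)]
      · -- σ5
        have h4 : ((σ w : ℕ)) = 0 := by omega
        refine Or.inr (Or.inr (Or.inl (Equiv.ext fun i => Fin.ext ?_)))
        by_cases hi1 : (i:ℕ) = D - 1
        · have : i = eDm1 D := Fin.ext (by rw [hi1, eDm1_val])
          rw [this, σ5_eDm1 hD, ← hweq, h4]
        · by_cases hi2 : (i:ℕ) = D + 1
          · have : i = eD1 D := Fin.ext (by rw [hi2, eD1_val])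
            rw [this, σ5_eD1 hD, ← histar_eD1, hstarfix, hsD1]
          · by_cases hi3 : (i:ℕ) = D
            · have : i = eD D := Fin.ext (by rw [hi3, eD_val])
              rw [this, σ5_eD, h3]
            · have hneistar : i ≠ istar := Fin.ne_of_val_ne (by rw [hsD1]; exact hi2)
              have hge : ¬ (((σ i:ℕ)) < 2) := by
                intro hlt
                rcases (by omega : ((σ i:ℕ)) = 0 ∨ ((σ i:ℕ)) = 1) with h | h
                · exact hi1 (by
                    have := congrArg Fin.val (hinj i w (by omega))
                    rw [hw_val, hsD1] at this
                    omega)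
                · exact hi3 (by
                    have := congrArg Fin.val (hinj i (eD D) (by omega))
                    rw [eD_val] at this
                    omega)
              have hlt : (i:ℕ) < D := hsmall i hge hneistar
              rw [hshift i hge hneistar, σ5_other i hi1 hi3 hi2,
                Nat.mod_eq_of_lt (by omega)]

-- ## entry value lemmas
lemma Mat_row0 (p : T[X]) (D : ℕ) (r c : Fin (D+2)) (hr : (r:ℕ) = 0) :
    Mat p D r c = C (p.coeff (c:ℕ)) := by
  rw [Mat, if_pos (by omega), if_pos (by omega), hr, Nat.sub_zero]

lemma Mat_row1 (p : T[X]) (D : ℕ) (r c : Fin (D+2)) (hr : (r:ℕ) = 1) (hc : 1 ≤ (c:ℕ)) :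
    Mat p D r c = C (p.coeff ((c:ℕ) - 1)) := by
  rw [Mat, if_pos (by omega), if_pos (by omega), hr]

lemma Mat_pb (p : T[X]) (D : ℕ) (r c : Fin (D+2)) (h : (c:ℕ) + 2 = (r:ℕ)) :
    Mat p D r c = pb := by
  rw [Mat, if_neg (by omega), if_pos h]

lemma Mat_pa (p : T[X]) (D : ℕ) (r c : Fin (D+2)) (h : (c:ℕ) = (r:ℕ)) (h2 : 2 ≤ (r:ℕ)) :
    Mat p D r c = pa := by
  rw [Mat, if_neg (by omega), if_neg (by omega), if_pos h]

-- ## the four special products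
lemma prod_σ1 (p : T[X]) (D : ℕ) (hD : 2 ≤ D) :
    ∏ i, Mat p D ((σ1 D) i) i = C (p.coeff D) * C (p.coeff D) * pb ^ D := by
  rw [prod_two_special (fun i => Mat p D ((σ1 D) i) i) (eD D) (eD1 D)
    (Fin.ne_of_val_ne (by rw [eD_val, eD1_val]; omega)) pb (fun i hx hy => by
      have h1 : (i:ℕ) < D := by
        have := i.isLt
        have hx' : (i:ℕ) ≠ D := fun h => hx (Fin.ext (by rw [h, eD_val]))
        have hy' : (i:ℕ) ≠ D + 1 := fun h => hy (Fin.ext (by rw [h, eD1_val]))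
        omega
      exact Mat_pb p D _ i (by rw [σ1_val_lt D i h1]))]
  rw [Mat_row0 p D _ _ (σ1_eD D), Mat_row1 p D _ _ (σ1_eD1 D) (by rw [eD1_val]; omega)]
  rw [eD_val, eD1_val, Nat.add_sub_cancel, show D + 2 - 2 = D by omega]

lemma prod_σ3 (p : T[X]) (D : ℕ) (hD : 2 ≤ D) :
    ∏ i, Mat p D ((σ3 D) i) i
      = C (p.coeff (D-2)) * C (p.coeff D) * pa * pb ^ (D - 1) := by
  rw [prod_three_special (fun i => Mat p D ((σ3 D) i) i) (eDm2 D) (eD1 D) (eD D)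
    (Fin.ne_of_val_ne (by rw [eDm2_val, eD1_val]; omega))
    (ne_eDm2_eD hD)
    (Fin.ne_of_val_ne (by rw [eD1_val, eD_val]; omega)) pb (fun i hx hy hz => by
      have hx' : (i:ℕ) ≠ D - 2 := fun h => hx (Fin.ext (by rw [h, eDm2_val]))
      have hy' : (i:ℕ) ≠ D + 1 := fun h => hy (Fin.ext (by rw [h, eD1_val]))
      have hz' : (i:ℕ) ≠ D := fun h => hz (Fin.ext (by rw [h, eD_val]))
      have h1 : (i:ℕ) < D := by
        have := i.isLt
        omega
      exact Mat_pb p D _ i (by rw [σ3_other i hx' hz', Nat.mod_eq_of_lt (by omega)]))]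
  rw [Mat_row0 p D _ _ σ3_eDm2, Mat_row1 p D _ _ (σ3_eD1 hD) (by rw [eD1_val]; omega),
    Mat_pa p D _ _ (by rw [σ3_eD hD, eD_val]) (by rw [σ3_eD hD]; omega)]
  rw [eDm2_val, eD1_val, Nat.add_sub_cancel, show D + 2 - 3 = D - 1 by omega]

lemma prod_σ5 (p : T[X]) (D : ℕ) (hD : 2 ≤ D) :
    ∏ i, Mat p D ((σ5 D) i) i
      = C (p.coeff (D-1)) * C (p.coeff (D-1)) * pa * pb ^ (D - 1) := by
  rw [prod_three_special (fun i => Mat p D ((σ5 D) i) i) (eDm1 D) (eD D) (eD1 D)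
    (ne_eDm1_eD hD) (ne_eDm1_eD1)
    (Fin.ne_of_val_ne (by rw [eD_val, eD1_val]; omega)) pb (fun i hx hy hz => by
      have hx' : (i:ℕ) ≠ D - 1 := fun h => hx (Fin.ext (by rw [h, eDm1_val]))
      have hy' : (i:ℕ) ≠ D := fun h => hy (Fin.ext (by rw [h, eD_val]))
      have hz' : (i:ℕ) ≠ D + 1 := fun h => hz (Fin.ext (by rw [h, eD1_val]))
      have h1 : (i:ℕ) < D := by
        have := i.isLt
        omega
      exact Mat_pb p D _ i (by rw [σ5_other i hx' hy' hz', Nat.mod_eq_of_lt (by omega)]))]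
  rw [Mat_row0 p D _ _ (σ5_eDm1 hD), Mat_row1 p D _ _ σ5_eD (by rw [eD_val]; omega),
    Mat_pa p D _ _ (by rw [σ5_eD1 hD, eD1_val]) (by rw [σ5_eD1 hD]; omega)]
  rw [eDm1_val, eD_val, show D + 2 - 3 = D - 1 by omega, show D - 1 = D - 1 by omega]

lemma prod_σ6 (p : T[X]) (D : ℕ) (hD : 2 ≤ D) :
    ∏ i, Mat p D ((σ6 D) i) i
      = C (p.coeff (D-2)) * C (p.coeff D) * pa * pb ^ (D - 1) := by
  rw [prod_three_special (fun i => Mat p D ((σ6 D) i) i) (eDm1 D) (eD D) (eD1 D)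
    (ne_eDm1_eD hD) (ne_eDm1_eD1)
    (Fin.ne_of_val_ne (by rw [eD_val, eD1_val]; omega)) pb (fun i hx hy hz => by
      have hx' : (i:ℕ) ≠ D - 1 := fun h => hx (Fin.ext (by rw [h, eDm1_val]))
      have hy' : (i:ℕ) ≠ D := fun h => hy (Fin.ext (by rw [h, eD_val]))
      have hz' : (i:ℕ) ≠ D + 1 := fun h => hz (Fin.ext (by rw [h, eD1_val]))
      have h1 : (i:ℕ) < D := by
        have := i.isLt
        omega
      exact Mat_pb p D _ i (by rw [σ6_other i hx' hz', Nat.mod_eq_of_lt (by omega)]))]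
  rw [Mat_row1 p D _ _ σ6_eDm1 (by rw [eDm1_val]; omega),
    Mat_row0 p D _ _ (σ6_eD hD),
    Mat_pa p D _ _ (by rw [σ6_eD1 hD, eD1_val]) (by rw [σ6_eD1 hD]; omega)]
  rw [eDm1_val, eD_val, show D - 1 - 1 = D - 2 by omega,
    show D + 2 - 3 = D - 1 by omega]

-- ## determinant coefficients in top degrees
lemma det_coeff (p : T[X]) (D : ℕ) (hD : 2 ≤ D)
    (htop : ∀ m, D < m → p.coeff m = 0) (k : ℕ) (hk : 2*D - 1 ≤ k) :
    ((Mat p D).det).coeff k =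
      (∏ i, Mat p D ((σ1 D) i) i).coeff k
      - (∏ i, Mat p D ((σ3 D) i) i).coeff k
      + (∏ i, Mat p D ((σ5 D) i) i).coeff k
      - (∏ i, Mat p D ((σ6 D) i) i).coeff k := by
  classical
  rw [Matrix.det_apply, finset_sum_coeff]
  have hzero : ∀ σ ∈ (Finset.univ : Finset (Equiv.Perm (Fin (D+2)))),
      σ ∉ ({σ1 D, σ3 D, σ5 D, σ6 D} : Finset (Equiv.Perm (Fin (D+2)))) →
      (Equiv.Perm.sign σ • ∏ i, Mat p D (σ i) i).coeff k = 0 := by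
    intro σ _ hσ
    rw [Polynomial.coeff_smul]
    by_cases hP : (∏ i, Mat p D (σ i) i).coeff k = 0
    · rw [hP, smul_zero]
    · exfalso
      rcases classify p D hD htop σ k hk hP with rfl | rfl | rfl | rfl <;> simp at hσ
  rw [← Finset.sum_subset (Finset.subset_univ ({σ1 D, σ3 D, σ5 D, σ6 D} :
    Finset (Equiv.Perm (Fin (D+2))))) hzero]
  rw [Finset.sum_insert (by
      simp only [Finset.mem_insert, Finset.mem_singleton]
      push_neg
      exact ⟨σ1_ne_σ3 hD, σ1_ne_σ5 hD, σ1_ne_σ6 hD⟩),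
    Finset.sum_insert (by
      simp only [Finset.mem_insert, Finset.mem_singleton]
      push_neg
      exact ⟨σ3_ne_σ5 hD, σ3_ne_σ6 hD⟩),
    Finset.sum_insert (by
      simp only [Finset.mem_singleton]
      exact σ5_ne_σ6 hD),
    Finset.sum_singleton]
  rw [Polynomial.coeff_smul, Polynomial.coeff_smul, Polynomial.coeff_smul,
    Polynomial.coeff_smul, sign_σ1, sign_σ3 hD, sign_σ5 hD, sign_σ6]
  simp only [one_smul, Units.neg_smul]
  ring

-- ## wrappers
lemma pb_pow_coeff_sub' (d : ℕ) (hd : 1 ≤ d) :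
    (pb ^ d).coeff (2*d - 1) = -(d:ℤ) • (1 : T) := by
  obtain ⟨e, rfl⟩ : ∃ e, d = e + 1 := ⟨d - 1, by omega⟩
  rw [show 2*(e+1) - 1 = 2*e + 1 by omega, pb_pow_coeff_sub e]
  push_cast
  ring_nf

lemma ba_coeff' (d : ℕ) (hd : 1 ≤ d) : (pb ^ (d-1) * pa).coeff (2*d - 1) = 1 := by
  rw [show 2*d - 1 = 2*(d-1) + 1 by omega]
  exact pb_pow_pa_coeff_top (d-1)

lemma ba_deg' (d : ℕ) (hd : 1 ≤ d) : (pb ^ (d-1) * pa).degree ≤ ((2*d - 1 : ℕ) : WithBot ℕ) := by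
  have := degree_pb_pow_pa (d-1)
  rwa [show 2*(d-1) + 1 = 2*d - 1 by omega] at this

lemma coeff_CCpa (u v : T) (d : ℕ) (k : ℕ) :
    (C u * C v * pa * pb ^ d).coeff k = u * (v * ((pb ^ d * pa).coeff k)) := by
  rw [show C u * C v * pa * pb ^ d = C u * (C v * (pb ^ d * pa)) by ring,
    coeff_C_mul, coeff_C_mul]

lemma coeff_CCpb (u v : T) (d : ℕ) (k : ℕ) :
    (C u * C v * pb ^ d).coeff k = u * (v * ((pb ^ d).coeff k)) := by
  rw [mul_assoc, coeff_C_mul, coeff_C_mul]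

-- ## the induction step
theorem step (p : S) (D : ℕ) (hD : 2 ≤ D)
    (h1 : p.coeff D = 1) (h2 : ∀ m, D < m → p.coeff m = 0)
    (h3 : ∀ k, (p.coeff k).degree ≤ ((D : ℕ) : WithBot ℕ))
    (h4 : (p.coeff (D-1)).coeff D = 1) :
    (_root_.resultant (p.map C) fTY).coeff (2*D) = 1 ∧
    (∀ m, 2*D < m → (_root_.resultant (p.map C) fTY).coeff m = 0) ∧
    (∀ k, ((_root_.resultant (p.map C) fTY).coeff k).degree ≤ ((2*D : ℕ) : WithBot ℕ)) ∧
    ((_root_.resultant (p.map C) fTY).coeff (2*D-1)).coeff (2*D) = 1 := by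
  have hnd : p.natDegree = D :=
    le_antisymm (natDegree_le_iff_coeff_eq_zero.2 h2)
      (le_natDegree_of_ne_zero (by rw [h1]; exact one_ne_zero))
  rw [resultant_eq_det p D hnd]
  have hba_lt : ∀ m : ℕ, 2*D - 1 < m → (pb ^ (D-1) * pa).coeff m = 0 := by
    intro m hm
    exact coeff_eq_zero_of_degree_lt ((ba_deg' D (by omega)).trans_lt
      (by exact_mod_cast WithBot.coe_lt_coe.2 hm))
  have hpb_lt : ∀ m : ℕ, 2*D < m → (pb ^ D).coeff m = 0 := by
    intro m hm
    exact coeff_eq_zero_of_degree_lt ((degree_pb_pow D).trans_lt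
      (by exact_mod_cast WithBot.coe_lt_coe.2 hm))
  refine ⟨?_, ?_, ?_, ?_⟩
  · -- top coefficient 1
    rw [det_coeff p D hD h2 (2*D) (by omega), prod_σ1 p D hD, prod_σ3 p D hD,
      prod_σ5 p D hD, prod_σ6 p D hD, coeff_CCpb, coeff_CCpa, coeff_CCpa,
      pb_pow_coeff_top, hba_lt (2*D) (by omega), h1]
    ring
  · -- vanishing above 2D
    intro m hm
    rw [det_coeff p D hD h2 m (by omega), prod_σ1 p D hD, prod_σ3 p D hD,
      prod_σ5 p D hD, prod_σ6 p D hD, coeff_CCpb, coeff_CCpa, coeff_CCpa,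
      hba_lt m (by omega), hpb_lt m (by omega)]
    ring
  · -- inner degree bound
    intro k
    rw [Matrix.det_apply, finset_sum_coeff]
    refine (degree_sum_le _ _).trans (Finset.sup_le fun σ _ => ?_)
    rw [Polynomial.coeff_smul, Units.smul_def]
    refine (degree_smul_le _ _).trans ?_
    have := coeff_deg_prod Finset.univ (fun i => Mat p D (σ i) i)
      (fun i => if ((σ i : ℕ)) < 2 then D else 0)
      (fun i _ => Mat_entry_coeff_deg p D h3 (σ i) i) k
    rwa [sum_bound σ] at this
  · -- the key coefficient
    rw [det_coeff p D hD h2 (2*D-1) (le_refl _), prod_σ1 p D hD, prod_σ3 p D hD,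
      prod_σ5 p D hD, prod_σ6 p D hD, coeff_CCpb, coeff_CCpa, coeff_CCpa,
      pb_pow_coeff_sub' D (by omega), ba_coeff' D (by omega), h1]
    have hd2 : ∀ m : ℕ, 2*D ≤ m → (p.coeff (D-2)).coeff m = 0 := by
      intro m hm
      exact coeff_eq_zero_of_degree_lt ((h3 (D-2)).trans_lt
        (by exact_mod_cast WithBot.coe_lt_coe.2 (by omega)))
    have hnd1 : (p.coeff (D-1)).natDegree = D :=
      le_antisymm (natDegree_le_iff_degree_le.2 (h3 (D-1)))
        (le_natDegree_of_ne_zero (by rw [h4]; exact one_ne_zero))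
    have h5 : (p.coeff (D-1)).leadingCoeff = 1 := by
      rw [leadingCoeff, hnd1, h4]
    have hsq : ((p.coeff (D-1)) * (p.coeff (D-1))).coeff (2*D) = 1 := by
      have := coeff_mul_degree_add_degree (p.coeff (D-1)) (p.coeff (D-1))
      rw [hnd1, h5, one_mul] at this
      rw [two_mul]
      exact this
    simp only [one_mul, mul_one]
    rw [coeff_sub, coeff_add, coeff_sub, hsq, hd2 (2*D) (le_refl _),
      Polynomial.coeff_smul, coeff_one, if_neg (by omega), smul_zero]
    ring
-- ## base case
lemma fXY_coeff (k : ℕ) : fXY.coeff k =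
    if k = 0 then X^2 else if k = 1 then X^2 - 1 else if k = 2 then 1 else 0 := by
  rw [fXY, coeff_sub, coeff_add, coeff_add, coeff_C_mul, coeff_C, coeff_X_pow]
  rcases k with _ | _ | _ | k <;> simp [coeff_X] <;> try ring

lemma inv_all (n : ℕ) (hn : 1 ≤ n) :
    (Rres n).coeff (2^n) = 1 ∧ (∀ m, 2^n < m → (Rres n).coeff m = 0) ∧
    (∀ k, ((Rres n).coeff k).degree ≤ (((2:ℕ)^n : ℕ) : WithBot ℕ)) ∧
    ((Rres n).coeff (2^n - 1)).coeff (2^n) = 1 := by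
  induction n with
  | zero => omega
  | succ m ih =>
    rcases Nat.eq_zero_or_pos m with rfl | hm
    · -- n = 1
      have hr : Rres (0+1) = fXY := rfl
      have e1 : (2:ℕ)^(0+1) = 2 := by norm_num
      rw [hr, e1]
      refine ⟨?_, ?_, ?_, ?_⟩
      · rw [fXY_coeff]
        norm_num
      · intro m hm
        rw [fXY_coeff, if_neg (by omega), if_neg (by omega), if_neg (by omega)]
      · intro k
        rw [fXY_coeff]
        split
        · exact_mod_cast (degree_X_pow 2).le
        · split
          · refine (degree_sub_le _ _).trans (max_le ?_ ?_)
            · exact_mod_cast (degree_X_pow 2).le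
            · exact degree_one_le.trans (by exact_mod_cast WithBot.coe_le_coe.2 (by omega))
          · split
            · exact degree_one_le.trans (by exact_mod_cast WithBot.coe_le_coe.2 (by omega))
            · simp
      · rw [show (2:ℕ) - 1 = 1 by norm_num, fXY_coeff]
        simp [coeff_X_pow, coeff_one]
    · obtain ⟨h1, h2, h3, h4⟩ := ih hm
      obtain ⟨l, rfl⟩ : ∃ l, m = l + 1 := ⟨m-1, by omega⟩
      have hre : Rres (l+1+1) = _root_.resultant ((Rres (l+1)).map C) fTY := rfl
      have h2pow : (2:ℕ)^(l+1+1) = 2 * 2^(l+1) := by rw [pow_succ]; ring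
      rw [hre, h2pow]
      exact step (Rres (l+1)) (2^(l+1))
        (by calc (2:ℕ) = 2^1 := by norm_num
              _ ≤ 2^(l+1) := Nat.pow_le_pow_right (by norm_num) (by omega))
        h1 h2 h3 h4

lemma final (p : S) (D : ℕ) (hD : 2 ≤ D)
    (h1 : p.coeff D = 1) (h2 : ∀ m, D < m → p.coeff m = 0)
    (h3 : ∀ k, (p.coeff k).degree ≤ ((D : ℕ) : WithBot ℕ))
    (h4 : (p.coeff (D-1)).coeff D = 1) :
    (p.eval X).degree = ((2*D - 1 : ℕ) : WithBot ℕ) := by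
  have hnd : p.natDegree = D :=
    le_antisymm (natDegree_le_iff_coeff_eq_zero.2 h2)
      (le_natDegree_of_ne_zero (by rw [h1]; exact one_ne_zero))
  have he : p.eval X = ∑ i ∈ Finset.range (D+1), p.coeff i * X^i := by
    rw [eval_eq_sum_range, hnd]
  have hcoeff : (p.eval X).coeff (2*D-1) = 1 := by
    rw [he, finset_sum_coeff]
    rw [Finset.sum_eq_single (D-1)]
    · rw [coeff_mul_X_pow', if_pos (by omega), show 2*D-1-(D-1) = D by omega, h4]
    · intro b hb hbne
      rw [Finset.mem_range] at hb
      rw [coeff_mul_X_pow', if_pos (by omega)]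
      rcases eq_or_ne b D with rfl | hbD
      · rw [h1, coeff_one, if_neg (by omega)]
      · exact coeff_eq_zero_of_degree_lt ((h3 b).trans_lt
          (by exact_mod_cast WithBot.coe_lt_coe.2 (by omega)))
    · intro h
      exact absurd (Finset.mem_range.2 (by omega)) h
  have hle : (p.eval X).degree ≤ ((2*D - 1 : ℕ) : WithBot ℕ) := by
    rw [he]
    refine (degree_sum_le _ _).trans (Finset.sup_le fun b hb => ?_)
    rw [Finset.mem_range] at hb
    rcases eq_or_ne b D with rfl | hbne
    · rw [h1, one_mul, degree_X_pow]
      exact_mod_cast WithBot.coe_le_coe.2 (by omega)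
    · refine (degree_mul_le _ _).trans ?_
      refine le_trans (add_le_add (h3 b) (degree_X_pow b).le) ?_
      rw [← Nat.cast_add]
      exact_mod_cast WithBot.coe_le_coe.2 (by omega)
  exact le_antisymm hle (le_degree_of_ne_zero (by rw [hcoeff]; exact one_ne_zero))

end
end RnAux
/-- For every `n ≥ 1`, the polynomial `Rₙ(x) = R⁽ⁿ⁾(x, x) ∈ ℤ[x]` has degree
exactly `2^{n+1} - 1`. -/
theorem Rn_degree (n : ℕ) (hn : 1 ≤ n) :
    ((Rres n).eval X).degree = (2 ^ (n + 1) - 1 : ℕ) := by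
  obtain ⟨h1, h2, h3, h4⟩ := RnAux.inv_all n hn
  have hD : 2 ≤ 2^n := by
    calc (2:ℕ) = 2^1 := by norm_num
      _ ≤ 2^n := Nat.pow_le_pow_right (by norm_num) hn
  have h := RnAux.final (Rres n) (2^n) hD h1 h2 h3 h4
  rw [h]
  have he : 2^(n+1) = 2 * 2^n := by rw [pow_succ]; ring
  have : 2 * 2^n - 1 = 2^(n+1) - 1 := by omega
  exact_mod_cast congrArg (Nat.cast : ℕ → WithBot ℕ) this
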